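/- Let T = U|T| and S = V|S| be the polar decompositions of bounded operators T, S on a complex Hilbert space H, and let TS = W|TS| be the polar decomposition of TS. Then |T|·|S^*| = (U^* W V^*) | |T|·|S^*| | is the polar decomposition of |T|·|S^*|; that is, U^* W V^* is a partial isometry and (U^* W V^*)^*(U^* W V^*) equals the orthogonal projection onto the closure of the range of | |T|·|S^*| |. -/

import Mathlib

set_option maxHeartbeats 1000000
set_option synthInstance.maxHeartbeats 400000
set_option linter.unusedSectionVars false

open ContinuousLinearMap

variable {H : Type*} [NormedAddCommGroup H] [InnerProductSpace ℂ H] [CompleteSpace H]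

/-- The absolute value `|T| = (T^*T)^(1/2)` of a bounded operator on a complex
Hilbert space, defined via the continuous functional calculus. -/
noncomputable def absOp (T : H →L[ℂ] H) : H →L[ℂ] H :=
  cfc Real.sqrt (adjoint T * T)

/-- The orthogonal projection of `H` onto the closure of the range of `T`,
regarded as an operator on `H`. -/
noncomputable def rangeProjOp (T : H →L[ℂ] H) : H →L[ℂ] H :=
  (LinearMap.range (T : H →ₗ[ℂ] H)).topologicalClosure.subtypeL ∘L
    (LinearMap.range (T : H →ₗ[ℂ] H)).topologicalClosure.orthogonalProjectionOnto

/-- `U` is a partial isometry: `U^*U` is an orthogonal projection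
(a self-adjoint idempotent). -/
def IsPartialIsometryOp (U : H →L[ℂ] H) : Prop :=
  IsSelfAdjoint (adjoint U * U) ∧ (adjoint U * U) * (adjoint U * U) = adjoint U * U

/-- `T = U|T|` is the polar decomposition of `T`: `U` is a partial isometry and
`U^*U` is the orthogonal projection onto the closure of the range of `T^*`. -/
def IsPolarDecompositionOp (T U : H →L[ℂ] H) : Prop :=
  T = U * absOp T ∧ IsPartialIsometryOp U ∧ adjoint U * U = rangeProjOp (adjoint T)

/-! ### Auxiliary lemmas -/

lemma norm_apply_eq_of {C D : H →L[ℂ] H} (h : adjoint C * C = adjoint D * D) (x : H) :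
    ‖C x‖ = ‖D x‖ := by
  have h1 := apply_norm_eq_sqrt_inner_adjoint_left C x
  have h2 := apply_norm_eq_sqrt_inner_adjoint_left D x
  rw [h1, h2]
  congr 2
  exact congrArg (fun E : H →L[ℂ] H => (inner ℂ (E x) x : ℂ)) h

lemma eq_zero_of_adjoint_mul_self {C : H →L[ℂ] H} (h : adjoint C * C = 0) : C = 0 := by
  ext x
  have : ‖C x‖ = ‖(0 : H →L[ℂ] H) x‖ := norm_apply_eq_of (by simpa using h) x
  simpa using this

lemma rangeProjOp_apply_mem (C : H →L[ℂ] H) (x : H) :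
    rangeProjOp C x ∈ (LinearMap.range (C : H →ₗ[ℂ] H)).topologicalClosure :=
  ((LinearMap.range (C : H →ₗ[ℂ] H)).topologicalClosure.orthogonalProjectionOnto x).2

lemma rangeProjOp_apply_of_mem (C : H →L[ℂ] H) {x : H}
    (hx : x ∈ (LinearMap.range (C : H →ₗ[ℂ] H)).topologicalClosure) : rangeProjOp C x = x := by
  exact Submodule.starProjection_eq_self_iff.mpr hx

lemma rangeProjOp_isSelfAdjoint (C : H →L[ℂ] H) : IsSelfAdjoint (rangeProjOp C) :=
  isSelfAdjoint_starProjection _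

lemma rangeProjOp_comp (C : H →L[ℂ] H) : rangeProjOp C * C = C := by
  ext x
  exact rangeProjOp_apply_of_mem C
    (Submodule.le_topologicalClosure _ (LinearMap.mem_range_self _ x))

lemma eq_rangeProjOp {C P : H →L[ℂ] H} (hP : IsSelfAdjoint P)
    (hfix : ∀ x ∈ (LinearMap.range (C : H →ₗ[ℂ] H)).topologicalClosure, P x = x)
    (hran : ∀ x, P x ∈ (LinearMap.range (C : H →ₗ[ℂ] H)).topologicalClosure) :
    P = rangeProjOp C := by
  ext x
  have hv : P x ∈ (LinearMap.range (C : H →ₗ[ℂ] H)).topologicalClosure := hran x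
  have horth : x - P x ∈ ((LinearMap.range (C : H →ₗ[ℂ] H)).topologicalClosure)ᗮ := by
    rw [Submodule.mem_orthogonal]
    intro w hw
    have h1 : inner ℂ w (P x) = (inner ℂ w x : ℂ) := by
      rw [← hP.adjoint_eq, adjoint_inner_right, hfix w hw]
    rw [inner_sub_right, h1, sub_self]
  have := Submodule.eq_starProjection_of_mem_orthogonal
    (K := (LinearMap.range (C : H →ₗ[ℂ] H)).topologicalClosure) hv horth
  exact this.symm

lemma mapsTo_closure {V C : H →L[ℂ] H} {K : Submodule ℂ H} (hK : IsClosed (K : Set H))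
    (h : ∀ y, V (C y) ∈ K) :
    ∀ x ∈ (LinearMap.range (C : H →ₗ[ℂ] H)).topologicalClosure, V x ∈ K := by
  intro x hx
  have hx' : x ∈ closure ((LinearMap.range (C : H →ₗ[ℂ] H) : Submodule ℂ H) : Set H) := hx
  have hsub : closure ((LinearMap.range (C : H →ₗ[ℂ] H) : Submodule ℂ H) : Set H) ⊆ V ⁻¹' (K : Set H) := by
    apply closure_minimal
    · rintro y ⟨z, rfl⟩
      exact h z
    · exact hK.preimage V.continuous
  exact hsub hx'

lemma fixes_closure_of_comp {P C : H →L[ℂ] H} (h : P * C = C) :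
    ∀ x ∈ (LinearMap.range (C : H →ₗ[ℂ] H)).topologicalClosure, P x = x := by
  intro x hx
  have hx' : x ∈ closure ((LinearMap.range (C : H →ₗ[ℂ] H) : Submodule ℂ H) : Set H) := hx
  have hsub : closure ((LinearMap.range (C : H →ₗ[ℂ] H) : Submodule ℂ H) : Set H) ⊆ {y | P y = y} := by
    apply closure_minimal
    · rintro y ⟨z, rfl⟩
      exact DFunLike.congr_fun h z
    · exact isClosed_eq P.continuous continuous_id
  exact hsub hx'

lemma adj_mul (A B : H →L[ℂ] H) : adjoint (A * B) = adjoint B * adjoint A :=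
  adjoint_comp A B

lemma adjoint_mul_self_nonneg (T : H →L[ℂ] H) : 0 ≤ adjoint T * T := by
  rw [← star_eq_adjoint]; exact star_mul_self_nonneg T

lemma absOp_eq_sqrt (T : H →L[ℂ] H) : absOp T = CFC.sqrt (adjoint T * T) := by
  have ha : 0 ≤ adjoint T * T := adjoint_mul_self_nonneg T
  symm
  apply CFC.sqrt_unique
  · rw [absOp, ← cfc_mul _ _ _ Real.continuous_sqrt.continuousOn Real.continuous_sqrt.continuousOn]
    conv_rhs => rw [← cfc_id ℝ (adjoint T * T)]
    exact cfc_congr fun x hx => Real.mul_self_sqrt (spectrum_nonneg_of_nonneg ha hx)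
  · exact cfc_nonneg fun x _ => Real.sqrt_nonneg x

lemma absOp_nonneg (T : H →L[ℂ] H) : 0 ≤ absOp T := by
  rw [absOp_eq_sqrt]; exact CFC.sqrt_nonneg _

lemma absOp_isSelfAdjoint (T : H →L[ℂ] H) : IsSelfAdjoint (absOp T) :=
  (absOp_nonneg T).isSelfAdjoint

lemma absOp_adjoint_eq (T : H →L[ℂ] H) : adjoint (absOp T) = absOp T :=
  (absOp_isSelfAdjoint T).adjoint_eq

lemma absOp_mul_absOp (T : H →L[ℂ] H) : absOp T * absOp T = adjoint T * T := by
  rw [absOp_eq_sqrt]; exact CFC.sqrt_mul_sqrt_self _ (adjoint_mul_self_nonneg T)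

lemma absOp_unique {T R : H →L[ℂ] H} (hR : 0 ≤ R) (h : R * R = adjoint T * T) :
    absOp T = R := by
  rw [absOp_eq_sqrt, ← h]; exact CFC.sqrt_mul_self R hR

lemma norm_absOp_apply (T : H →L[ℂ] H) (x : H) : ‖absOp T x‖ = ‖T x‖ := by
  apply norm_apply_eq_of
  rw [absOp_adjoint_eq, absOp_mul_absOp]

lemma absOp_mul_eq_of {T R : H →L[ℂ] H} (h : T * R = T) : absOp T * R = absOp T := by
  ext x
  have h1 : absOp T (R x) - absOp T x = absOp T (R x - x) := (map_sub _ _ _).symm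
  have h2 : ‖absOp T (R x - x)‖ = ‖T (R x - x)‖ := norm_absOp_apply T _
  have h3 : T (R x - x) = 0 := by
    rw [map_sub]
    have := DFunLike.congr_fun h x
    simpa [mul_apply_eq_comp] using sub_eq_zero.mpr this
  have : absOp T (R x) - absOp T x = 0 := by
    rw [h1, ← norm_eq_zero, h2, h3, norm_zero]
  simpa [mul_apply_eq_comp] using sub_eq_zero.mp this

lemma partialIsometry_mul {U : H →L[ℂ] H} (hU : IsPartialIsometryOp U) :
    U * (adjoint U * U) = U := by
  obtain ⟨hsa, hidem⟩ := hU
  set P := adjoint U * U with hP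
  have hPadj : adjoint P = P := hsa.adjoint_eq
  have key : adjoint (U * P - U) * (U * P - U) = 0 := by
    rw [map_sub, adj_mul, hPadj]
    rw [sub_mul, mul_sub, mul_sub]
    rw [mul_assoc P (adjoint U) (U * P), ← mul_assoc (adjoint U) U P, ← hP]
    rw [← mul_assoc P P P, hidem, hidem]
    rw [mul_assoc P (adjoint U) U, ← hP, hidem]
    abel
  have := eq_zero_of_adjoint_mul_self key
  rwa [sub_eq_zero] at this

lemma proj_comm {P C : H →L[ℂ] H} (hP : IsSelfAdjoint P) (hC : IsSelfAdjoint C)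
    (h : C * P = C) : P * C = C := by
  have := congrArg adjoint h
  rwa [adj_mul, hP.adjoint_eq, hC.adjoint_eq] at this

lemma polar_d1 {T U : H →L[ℂ] H} (h : IsPolarDecompositionOp T U) :
    T * (adjoint U * U) = T := by
  have h0 := rangeProjOp_comp (adjoint T)
  rw [← h.2.2] at h0
  have h2 := congrArg adjoint h0
  rwa [adj_mul, adjoint_adjoint, h.2.1.1.adjoint_eq] at h2

lemma polar_d2 {T U : H →L[ℂ] H} (h : IsPolarDecompositionOp T U) :
    absOp T * (adjoint U * U) = absOp T :=
  absOp_mul_eq_of (polar_d1 h)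

lemma polar_d3 {T U : H →L[ℂ] H} (h : IsPolarDecompositionOp T U) :
    (adjoint U * U) * absOp T = absOp T :=
  proj_comm h.2.1.1 (absOp_isSelfAdjoint T) (polar_d2 h)

/-- If `T = U|T|`, `S = V|S|` and `TS = W|TS|` are polar decompositions, then
`|T||S^*| = (U^* W V^*) | |T||S^*| |` is the polar decomposition of `|T||S^*|`:
`U^* W V^*` is a partial isometry and `(U^* W V^*)^*(U^* W V^*)` is the
orthogonal projection onto the closure of the range of `| |T||S^*| |`. -/
theorem polarDecomposition_absOp_mul (T S U V W : H →L[ℂ] H)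
    (hT : IsPolarDecompositionOp T U) (hS : IsPolarDecompositionOp S V)
    (hW : IsPolarDecompositionOp (T * S) W) :
    absOp T * absOp (adjoint S) =
        (adjoint U * W * adjoint V) * absOp (absOp T * absOp (adjoint S)) ∧
    IsPartialIsometryOp (adjoint U * W * adjoint V) ∧
    adjoint (adjoint U * W * adjoint V) * (adjoint U * W * adjoint V) =
        rangeProjOp (absOp (absOp T * absOp (adjoint S))) := by
  obtain ⟨hT1, hTU, hTP⟩ := hT
  obtain ⟨hS1, hSU, hSP⟩ := hS
  obtain ⟨hW1, hWU, hWP⟩ := hW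
  set X := adjoint U * W * adjoint V with hXdef
  set A := absOp T * absOp (adjoint S) with hAdef
  -- pointwise facts
  have pT1 : ∀ y, T y = U (absOp T y) := fun y => by
    simpa [mul_apply_eq_comp] using DFunLike.congr_fun hT1 y
  have pTfix : ∀ y, adjoint U (U (absOp T y)) = absOp T y := fun y => by
    simpa [mul_apply_eq_comp] using DFunLike.congr_fun (polar_d3 ⟨hT1, hTU, hTP⟩) y
  have pUT : ∀ y, adjoint U (T y) = absOp T y := fun y => by
    rw [pT1 y]; exact pTfix y
  have hTadj : adjoint T = absOp T * adjoint U := by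
    conv_lhs => rw [hT1, adj_mul, absOp_adjoint_eq]
  have pTadj : ∀ y, adjoint T y = absOp T (adjoint U y) := fun y => by
    simpa [mul_apply_eq_comp] using DFunLike.congr_fun hTadj y
  have pS1 : ∀ y, S y = V (absOp S y) := fun y => by
    simpa [mul_apply_eq_comp] using DFunLike.congr_fun hS1 y
  have pSfix : ∀ y, adjoint V (V (absOp S y)) = absOp S y := fun y => by
    simpa [mul_apply_eq_comp] using DFunLike.congr_fun (polar_d3 ⟨hS1, hSU, hSP⟩) y
  have hSadj : adjoint S = absOp S * adjoint V := by
    conv_lhs => rw [hS1, adj_mul, absOp_adjoint_eq]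
  have pSadj : ∀ y, adjoint S y = absOp S (adjoint V y) := fun y => by
    simpa [mul_apply_eq_comp] using DFunLike.congr_fun hSadj y
  have pT2 : ∀ y, adjoint T (T y) = absOp T (absOp T y) := fun y => by
    simpa [mul_apply_eq_comp] using (DFunLike.congr_fun (absOp_mul_absOp T) y).symm
  -- |S^*| = V |S| V^*
  have hSstar : absOp (adjoint S) = V * absOp S * adjoint V := by
    apply absOp_unique
    · rw [← star_eq_adjoint]
      exact star_right_conjugate_nonneg (absOp_nonneg S) V
    · rw [adjoint_adjoint]
      ext x
      simp only [mul_apply_eq_comp]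
      rw [pSfix, ← pS1, pSadj, pS1]
  have pSstar : ∀ y, absOp (adjoint S) y = V (absOp S (adjoint V y)) := fun y => by
    rw [hSstar]; simp [mul_apply_eq_comp]
  have pVSstar : ∀ y, V (adjoint S y) = absOp (adjoint S) y := fun y => by
    rw [pSadj, ← pSstar]
  have pSV : ∀ y, S (adjoint V y) = absOp (adjoint S) y := fun y => by
    rw [pS1, ← pSstar]
  -- facts about W and |TS|
  have pW1 : ∀ y, (T * S) y = W (absOp (T * S) y) := fun y => by
    simpa [mul_apply_eq_comp] using DFunLike.congr_fun hW1 y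
  have hTSadj : adjoint (T * S) = absOp (T * S) * adjoint W := by
    conv_lhs => rw [hW1, adj_mul, absOp_adjoint_eq]
  have pWadj : ∀ y, adjoint (T * S) y = absOp (T * S) (adjoint W y) := fun y => by
    simpa [mul_apply_eq_comp] using DFunLike.congr_fun hTSadj y
  have padjTS : ∀ y, adjoint (T * S) y = adjoint S (adjoint T y) := fun y => by
    simpa [mul_apply_eq_comp] using DFunLike.congr_fun (adj_mul T S) y
  have pTS2 : ∀ y, adjoint (T * S) ((T * S) y) = absOp (T * S) (absOp (T * S) y) :=
    fun y => by
    simpa [mul_apply_eq_comp] using (DFunLike.congr_fun (absOp_mul_absOp (T * S)) y).symm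
  have dTS_V : (T * S) * (adjoint V * V) = T * S := by
    rw [mul_assoc, polar_d1 ⟨hS1, hSU, hSP⟩]
  have habsTS_V : absOp (T * S) * (adjoint V * V) = absOp (T * S) :=
    absOp_mul_eq_of dTS_V
  have hVVabsTS : (adjoint V * V) * absOp (T * S) = absOp (T * S) :=
    proj_comm hSU.1 (absOp_isSelfAdjoint (T * S)) habsTS_V
  have pVVabsTS : ∀ y, adjoint V (V (absOp (T * S) y)) = absOp (T * S) y := fun y => by
    simpa [mul_apply_eq_comp] using DFunLike.congr_fun hVVabsTS y
  have habsTS_Q : absOp (T * S) * (adjoint W * W) = absOp (T * S) :=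
    absOp_mul_eq_of (polar_d1 ⟨hW1, hWU, hWP⟩)
  have hQabsTS : (adjoint W * W) * absOp (T * S) = absOp (T * S) :=
    proj_comm hWU.1 (absOp_isSelfAdjoint (T * S)) habsTS_Q
  have pQabsTS : ∀ y, adjoint W (W (absOp (T * S) y)) = absOp (T * S) y := fun y => by
    simpa [mul_apply_eq_comp] using DFunLike.congr_fun hQabsTS y
  -- |A| = V |TS| V^*
  have hAabs : absOp A = V * absOp (T * S) * adjoint V := by
    apply absOp_unique
    · rw [← star_eq_adjoint]
      exact star_right_conjugate_nonneg (absOp_nonneg (T * S)) V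
    · have hadjA : adjoint A = absOp (adjoint S) * absOp T := by
        rw [hAdef, adj_mul, absOp_adjoint_eq, absOp_adjoint_eq]
      rw [hadjA]
      ext x
      simp only [mul_apply_eq_comp]
      rw [pVVabsTS, ← pTS2, padjTS]
      have : (T * S) (adjoint V x) = T (S (adjoint V x)) := by simp [mul_apply_eq_comp]
      rw [this, pVSstar, pTadj, pUT, pSV, hAdef]
      simp [mul_apply_eq_comp]
  have pabsA : ∀ y, absOp A y = V (absOp (T * S) (adjoint V y)) := fun y => by
    rw [hAabs]; simp [mul_apply_eq_comp]
  -- first conjunct : A = X |A|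
  have conj1 : A = X * absOp A := by
    ext x
    simp only [hXdef, mul_apply_eq_comp]
    rw [pabsA, pVVabsTS, ← pW1]
    have : (T * S) (adjoint V x) = T (S (adjoint V x)) := by simp [mul_apply_eq_comp]
    rw [this, pUT, pSV, hAdef]
    simp [mul_apply_eq_comp]
  -- U U^* fixes W x
  have pWWW : ∀ y, W (adjoint W (W y)) = W y := fun y => by
    simpa [mul_apply_eq_comp] using DFunLike.congr_fun (partialIsometry_mul hWU) y
  have hQmem : ∀ y, adjoint W (W y) ∈ (LinearMap.range ((adjoint (T * S) : H →L[ℂ] H) : H →ₗ[ℂ] H)).topologicalClosure :=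
    fun y => by
    have := DFunLike.congr_fun hWP y
    simp only [mul_apply_eq_comp] at this
    rw [this]
    exact rangeProjOp_apply_mem _ y
  have hWmaps : ∀ x ∈ (LinearMap.range ((adjoint (T * S) : H →L[ℂ] H) : H →ₗ[ℂ] H)).topologicalClosure,
      W x ∈ (LinearMap.range (T : H →ₗ[ℂ] H)).topologicalClosure := by
    apply mapsTo_closure (Submodule.isClosed_topologicalClosure _)
    intro y
    have : W (adjoint (T * S) y) = (T * S) (adjoint W y) := by
      rw [pWadj, ← pW1]
    rw [this]
    exact Submodule.le_topologicalClosure _ ⟨S (adjoint W y), by simp [mul_apply_eq_comp]⟩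
  have hUUT : (U * adjoint U) * T = T := by
    ext x
    simp only [mul_apply_eq_comp]
    rw [pUT, ← pT1]
  have pUUW : ∀ y, U (adjoint U (W y)) = W y := fun y => by
    have hmem : W y ∈ (LinearMap.range (T : H →ₗ[ℂ] H)).topologicalClosure := by
      rw [← pWWW y]
      exact hWmaps _ (hQmem y)
    simpa [mul_apply_eq_comp] using fixes_closure_of_comp hUUT _ hmem
  -- X^* X pointwise
  have hadjX : adjoint X = V * (adjoint W * U) := by
    rw [hXdef, adj_mul, adjoint_adjoint, adj_mul, adjoint_adjoint]
  have pXX : ∀ x, (adjoint X * X) x = V (adjoint W (W (adjoint V x))) := fun x => by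
    rw [mul_apply_eq_comp, hadjX]
    simp only [mul_apply_eq_comp, hXdef]
    rw [pUUW]
  -- V^*V fixes Q z
  have hTSmem : ∀ x ∈ (LinearMap.range ((adjoint (T * S) : H →L[ℂ] H) : H →ₗ[ℂ] H)).topologicalClosure,
      x ∈ (LinearMap.range ((adjoint S : H →L[ℂ] H) : H →ₗ[ℂ] H)).topologicalClosure := by
    intro x hx
    have := mapsTo_closure (V := (1 : H →L[ℂ] H)) (C := adjoint (T * S))
      (K := (LinearMap.range ((adjoint S : H →L[ℂ] H) : H →ₗ[ℂ] H)).topologicalClosure)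
      (Submodule.isClosed_topologicalClosure _) (fun y => by
        rw [ContinuousLinearMap.one_apply, padjTS]
        exact Submodule.le_topologicalClosure _ ⟨adjoint T y, rfl⟩) x hx
    simpa using this
  have pVVQ : ∀ z, adjoint V (V (adjoint W (W z))) = adjoint W (W z) := fun z => by
    have hmem : adjoint W (W z) ∈ (LinearMap.range ((adjoint S : H →L[ℂ] H) : H →ₗ[ℂ] H)).topologicalClosure :=
      hTSmem _ (hQmem z)
    have h1 := DFunLike.congr_fun hSP (adjoint W (W z))
    simp only [mul_apply_eq_comp] at h1
    rw [h1, rangeProjOp_apply_of_mem _ hmem]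
  have pQQ : ∀ z, adjoint W (W (adjoint W (W z))) = adjoint W (W z) := fun z => by
    simpa [mul_apply_eq_comp] using DFunLike.congr_fun hWU.2 z
  -- partial isometry
  have hXsa : IsSelfAdjoint (adjoint X * X) := by
    have : IsSelfAdjoint (star X * X) := (star_mul_self_nonneg X).isSelfAdjoint
    rwa [star_eq_adjoint] at this
  have hXidem : (adjoint X * X) * (adjoint X * X) = adjoint X * X := by
    ext x
    simp only [mul_apply_eq_comp]
    have h1 := pXX x
    simp only [mul_apply_eq_comp] at h1
    rw [h1]
    have h2 := pXX (V (adjoint W (W (adjoint V x))))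
    simp only [mul_apply_eq_comp] at h2
    rw [h2, pVVQ, pQQ]
  refine ⟨conj1, ⟨hXsa, hXidem⟩, ?_⟩
  -- X^*X = rangeProjOp |A|
  apply eq_rangeProjOp hXsa
  · apply fixes_closure_of_comp
    ext x
    simp only [mul_apply_eq_comp]
    have h1 := pXX (absOp A x)
    simp only [mul_apply_eq_comp] at h1
    rw [h1, pabsA, pVVabsTS, pQabsTS, ← pabsA]
  · intro x
    rw [pXX x]
    have hVmaps : ∀ z ∈ (LinearMap.range ((adjoint (T * S) : H →L[ℂ] H) : H →ₗ[ℂ] H)).topologicalClosure,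
        V z ∈ (LinearMap.range ((absOp A : H →L[ℂ] H) : H →ₗ[ℂ] H)).topologicalClosure := by
      apply mapsTo_closure (Submodule.isClosed_topologicalClosure _)
      intro y
      have hadjA : adjoint A = absOp A * adjoint X := by
        conv_lhs => rw [conj1, adj_mul, absOp_adjoint_eq]
      have : V (adjoint (T * S) y) = absOp A (adjoint X (adjoint U y)) := by
        rw [padjTS, pVSstar, pTadj]
        have h2 := DFunLike.congr_fun hadjA (adjoint U y)
        simp only [mul_apply_eq_comp] at h2
        rw [← h2, hAdef]
        have h3 : adjoint A = absOp (adjoint S) * absOp T := by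
          rw [hAdef, adj_mul, absOp_adjoint_eq, absOp_adjoint_eq]
        have h4 := DFunLike.congr_fun h3 (adjoint U y)
        simp only [mul_apply_eq_comp] at h4
        rw [← hAdef, h4]
      rw [this]
      exact Submodule.le_topologicalClosure _ ⟨adjoint X (adjoint U y), rfl⟩
    exact hVmaps _ (hQmem (adjoint V x))
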